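/- Let ρ > 0, σ̃ > 0, and let h : ℝ → ℝ be twice continuously differentiable with bounded second derivative. Define p₁(x) = ∫_0^∞ e^{−ρt} ( ∫_ℝ h(x + y) dγ_{σ̃²t}(y) ) dt, where γ_v denotes the centered Gaussian measure on ℝ with variance v (and γ_0 is the Dirac mass at 0). Then p₁ is twice differentiable and satisfies the resolvent equation ρ p₁(x) − (σ̃²/2) p₁''(x) = h(x) for every x ∈ ℝ. -/

import Mathlib

open MeasureTheory ProbabilityTheory Real Filter Set
open scoped NNReal ENNReal Topology

noncomputable def gm : Measure ℝ := gaussianReal 0 1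
instance : IsProbabilityMeasure gm := by unfold gm; infer_instance

lemma gpdf_eq (y : ℝ) : gaussianPDFReal 0 1 y = (Real.sqrt (2 * Real.pi))⁻¹ * Real.exp (-(1/2) * y ^ 2) := by
  rw [gaussianPDFReal]
  simp only [NNReal.coe_one, mul_one, sub_zero]
  congr 1
  ring

lemma gm_integral (f : ℝ → ℝ) :
    ∫ y, f y ∂gm = ∫ y, gaussianPDFReal 0 1 y • f y := by
  unfold gm
  rw [gaussianReal_of_var_ne_zero 0 one_ne_zero, gaussianPDF_def]
  have : (fun y => ENNReal.ofReal (gaussianPDFReal 0 1 y))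
      = fun y => ((Real.toNNReal (gaussianPDFReal 0 1 y) : ℝ≥0) : ℝ≥0∞) := rfl
  rw [this, integral_withDensity_eq_integral_smul
    (by exact (measurable_gaussianPDFReal 0 1).real_toNNReal) f]
  congr 1
  ext y
  simp [NNReal.smul_def, Real.coe_toNNReal _ (gaussianPDFReal_nonneg 0 1 y)]

lemma gm_integrable_iff (f : ℝ → ℝ) :
    Integrable f gm ↔ Integrable (fun y => gaussianPDFReal 0 1 y • f y) := by
  unfold gm
  rw [gaussianReal_of_var_ne_zero 0 one_ne_zero, gaussianPDF_def]
  have : (fun y => ENNReal.ofReal (gaussianPDFReal 0 1 y))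
      = fun y => ((Real.toNNReal (gaussianPDFReal 0 1 y) : ℝ≥0) : ℝ≥0∞) := rfl
  rw [this, integrable_withDensity_iff_integrable_smul
    (by exact (measurable_gaussianPDFReal 0 1).real_toNNReal)]
  constructor <;> intro hi <;>
  · convert hi using 2 with y
    · rfl
    simp [NNReal.smul_def, Real.coe_toNNReal _ (gaussianPDFReal_nonneg 0 1 y)]

lemma integrable_quad_vol (a b c : ℝ) :
    Integrable (fun y => gaussianPDFReal 0 1 y • (a + b * |y| + c * y ^ 2)) := by
  simp only [gpdf_eq, smul_eq_mul]
  have h2 : Integrable (fun y : ℝ => Real.exp (-(1/2) * y ^ 2)) :=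
    integrable_exp_neg_mul_sq (by norm_num)
  have h3 : Integrable (fun y : ℝ => |y| * Real.exp (-(1/2) * y ^ 2)) := by
    have := (integrable_mul_exp_neg_mul_sq (b := 1/2) (by norm_num)).abs
    refine this.congr (Eventually.of_forall fun y => ?_)
    simp [abs_mul, abs_of_nonneg (Real.exp_pos _).le]
  have h4 : Integrable (fun y : ℝ => y ^ 2 * Real.exp (-(1/2) * y ^ 2)) := by
    have := integrable_rpow_mul_exp_neg_mul_sq (b := 1/2) (by norm_num) (s := 2) (by norm_num)
    refine this.congr (Eventually.of_forall fun y => ?_)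
    simp only [Real.rpow_two]
  have : Integrable (fun y : ℝ =>
      a * Real.exp (-(1/2) * y ^ 2) + b * (|y| * Real.exp (-(1/2) * y ^ 2))
        + c * (y ^ 2 * Real.exp (-(1/2) * y ^ 2))) :=
    ((h2.const_mul a).add (h3.const_mul b)).add (h4.const_mul c)
  have := this.const_mul (Real.sqrt (2 * Real.pi))⁻¹
  refine this.congr (Eventually.of_forall fun y => ?_)
  ring

lemma gm_integrable_quad (a b c : ℝ) :
    Integrable (fun y => a + b * |y| + c * y ^ 2) gm := by
  rw [gm_integrable_iff]
  exact integrable_quad_vol a b c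

lemma gm_integrable_of_bound (f : ℝ → ℝ) (hf : AEStronglyMeasurable f gm) (a b c : ℝ)
    (hb : ∀ y, |f y| ≤ a + b * |y| + c * y ^ 2) : Integrable f gm := by
  refine Integrable.mono' (gm_integrable_quad a b c) hf (Eventually.of_forall fun y => ?_)
  simpa using hb y

lemma gm_abs_integrable : Integrable (fun y : ℝ => |y|) gm := by
  have := gm_integrable_quad 0 1 0
  simpa using this

lemma gm_sq_integrable : Integrable (fun y : ℝ => y ^ 2) gm := by
  have := gm_integrable_quad 0 0 1
  simpa using this

lemma expE_tendsto_atTop : Tendsto (fun y : ℝ => Real.exp (-(1/2) * y ^ 2)) atTop (𝓝 0) := by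
  apply Real.tendsto_exp_atBot.comp
  have h1 : Tendsto (fun y : ℝ => y ^ 2) atTop atTop := tendsto_pow_atTop (two_ne_zero)
  have h2 : Tendsto (fun y : ℝ => (1/2) * y ^ 2) atTop atTop :=
    Tendsto.const_mul_atTop (show (0:ℝ) < 1/2 by norm_num) h1
  simpa [neg_mul] using (tendsto_neg_atBot_iff.mpr h2)

lemma absE_tendsto_atTop : Tendsto (fun y : ℝ => |y| * Real.exp (-(1/2) * y ^ 2)) atTop (𝓝 0) := by
  have hO : (fun x : ℝ => x ^ (1:ℝ) * Real.exp (-(1/2) * x ^ 2)) =o[atTop]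
      fun x : ℝ => Real.exp (-(1/2) * x) :=
    rpow_mul_exp_neg_mul_sq_isLittleO_exp_neg (by norm_num) 1
  have hexp : Tendsto (fun x : ℝ => Real.exp (-(1/2) * x)) atTop (𝓝 0) := by
    apply Real.tendsto_exp_atBot.comp
    have h2 : Tendsto (fun x : ℝ => (1/2) * x) atTop atTop :=
      Tendsto.const_mul_atTop (by norm_num) tendsto_id
    exact (tendsto_neg_atBot_iff.mpr h2).congr fun x => by ring
  have h0 : Tendsto (fun x : ℝ => x ^ (1:ℝ) * Real.exp (-(1/2) * x ^ 2)) atTop (𝓝 0) :=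
    hO.isBigO.trans_tendsto hexp
  have : Tendsto (fun x : ℝ => x * Real.exp (-(1/2) * x ^ 2)) atTop (𝓝 0) := by
    simpa [Real.rpow_one] using h0
  apply this.congr' ?_
  filter_upwards [eventually_ge_atTop (0:ℝ)] with x hx
  rw [abs_of_nonneg hx]

lemma linE_tendsto_atTop (a b : ℝ) :
    Tendsto (fun y : ℝ => (a + b * |y|) * Real.exp (-(1/2) * y ^ 2)) atTop (𝓝 0) := by
  have := ((expE_tendsto_atTop.const_mul a).add (absE_tendsto_atTop.const_mul b))
  simp only [mul_zero, add_zero] at this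
  refine this.congr fun y => by ring
lemma linE_tendsto_atBot (a b : ℝ) :
    Tendsto (fun y : ℝ => (a + b * |y|) * Real.exp (-(1/2) * y ^ 2)) atBot (𝓝 0) := by
  have := (linE_tendsto_atTop a b).comp tendsto_neg_atBot_atTop
  refine this.congr fun y => by simp [abs_neg]

lemma gm_ibp (f f' : ℝ → ℝ) (hderiv : ∀ y, HasDerivAt f (f' y) y)
    (hcont' : Continuous f') (L : ℝ) (hL : ∀ y, |f' y| ≤ L) :
    ∫ y, y * f y ∂gm = ∫ y, f' y ∂gm := by
  set c₀ : ℝ := (Real.sqrt (2 * Real.pi))⁻¹ with hc₀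
  have hc₀nn : 0 ≤ c₀ := inv_nonneg.mpr (Real.sqrt_nonneg _)
  have hfc : Continuous f := by
    rw [continuous_iff_continuousAt]; exact fun y => (hderiv y).continuousAt
  have hflin : ∀ y, |f y| ≤ |f 0| + L * |y| := by
    intro y
    have := Convex.norm_image_sub_le_of_norm_deriv_le (𝕜 := ℝ) (f := f) (s := univ)
      (fun x _ => (hderiv x).differentiableAt)
      (fun x _ => by rw [(hderiv x).deriv]; simpa using hL x) convex_univ (mem_univ 0) (mem_univ y)
    simp only [Real.norm_eq_abs, sub_zero] at this
    calc |f y| ≤ |f 0| + |f y - f 0| := by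
          have := abs_sub_abs_le_abs_sub (f y) (f 0); linarith
      _ ≤ |f 0| + L * |y| := by linarith
  set E : ℝ → ℝ := fun y => Real.exp (-(1/2) * y ^ 2) with hE
  have hEpos : ∀ y, 0 < E y := fun y => Real.exp_pos _
  have hEc : Continuous E := by
    rw [hE]; exact Real.continuous_exp.comp (continuous_const.mul (continuous_pow 2))
  have hEderiv : ∀ y, HasDerivAt E (-y * E y) y := by
    intro y
    have h1 : HasDerivAt (fun y : ℝ => -(1/2) * y ^ 2) (-(1/2) * (2 * y)) y :=
      (hasDerivAt_pow 2 y).const_mul (-(1/2)) |>.congr_deriv (by ring_nf)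
    have := h1.exp
    convert this using 1
    ring
  -- Φ = f * (c₀ * E)
  have hΦderiv : ∀ y, HasDerivAt (fun y => f y * (c₀ * E y))
      (f' y * (c₀ * E y) - y * f y * (c₀ * E y)) y := by
    intro y
    have := (hderiv y).mul ((hEderiv y).const_mul c₀)
    exact this.congr_deriv (by ring)
  have hint1 : Integrable (fun y => f' y * (c₀ * E y)) := by
    have : Integrable (fun y => gaussianPDFReal 0 1 y • (L + 0 * |y| + 0 * y ^ 2)) :=
      integrable_quad_vol L 0 0
    refine Integrable.mono' this ((hcont'.mul
      (continuous_const.mul hEc)).aestronglyMeasurable) (Eventually.of_forall fun y => ?_)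
    simp only [gpdf_eq, smul_eq_mul, Real.norm_eq_abs, mul_zero, zero_mul, add_zero]
    rw [abs_mul, abs_of_nonneg (mul_nonneg hc₀nn (hEpos y).le)]
    have h2 : 0 ≤ c₀ * E y := mul_nonneg hc₀nn (hEpos y).le
    calc |f' y| * (c₀ * E y) ≤ L * (c₀ * E y) := by
          apply mul_le_mul_of_nonneg_right (hL y) h2
      _ = c₀ * Real.exp (-(1/2) * y ^ 2) * L := by rw [hE]; ring
  have hint2 : Integrable (fun y => y * f y * (c₀ * E y)) := by
    have : Integrable (fun y => gaussianPDFReal 0 1 y • (0 + |f 0| * |y| + L * y ^ 2)) :=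
      integrable_quad_vol 0 (|f 0|) L
    refine Integrable.mono' this (((continuous_id.mul hfc).mul
      (continuous_const.mul hEc)).aestronglyMeasurable) (Eventually.of_forall fun y => ?_)
    simp only [gpdf_eq, smul_eq_mul, Real.norm_eq_abs, zero_add]
    rw [abs_mul, abs_mul, abs_of_nonneg (mul_nonneg hc₀nn (hEpos y).le)]
    have h2 : 0 ≤ c₀ * E y := mul_nonneg hc₀nn (hEpos y).le
    calc |y| * |f y| * (c₀ * E y) ≤ |y| * (|f 0| + L * |y|) * (c₀ * E y) := by
          apply mul_le_mul_of_nonneg_right _ h2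
          exact mul_le_mul_of_nonneg_left (hflin y) (abs_nonneg y)
      _ = c₀ * Real.exp (-(1/2) * y ^ 2) * (|f 0| * |y| + L * (|y| * |y|)) := by rw [hE]; ring
      _ = c₀ * Real.exp (-(1/2) * y ^ 2) * (|f 0| * |y| + L * y ^ 2) := by
          rw [← sq_abs y]; ring
  have htop : Tendsto (fun y => f y * (c₀ * E y)) atTop (𝓝 0) := by
    apply squeeze_zero_norm (a := fun y => (c₀ * |f 0| + c₀ * L * |y|) * E y)
    · intro y
      simp only [Real.norm_eq_abs]
      rw [abs_mul, abs_of_nonneg (mul_nonneg hc₀nn (hEpos y).le)]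
      calc |f y| * (c₀ * E y) ≤ (|f 0| + L * |y|) * (c₀ * E y) :=
            mul_le_mul_of_nonneg_right (hflin y) (mul_nonneg hc₀nn (hEpos y).le)
        _ = (c₀ * |f 0| + c₀ * L * |y|) * E y := by ring
    · exact linE_tendsto_atTop _ _
  have hbot : Tendsto (fun y => f y * (c₀ * E y)) atBot (𝓝 0) := by
    apply squeeze_zero_norm (a := fun y => (c₀ * |f 0| + c₀ * L * |y|) * E y)
    · intro y
      simp only [Real.norm_eq_abs]
      rw [abs_mul, abs_of_nonneg (mul_nonneg hc₀nn (hEpos y).le)]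
      calc |f y| * (c₀ * E y) ≤ (|f 0| + L * |y|) * (c₀ * E y) :=
            mul_le_mul_of_nonneg_right (hflin y) (mul_nonneg hc₀nn (hEpos y).le)
        _ = (c₀ * |f 0| + c₀ * L * |y|) * E y := by ring
    · exact linE_tendsto_atBot _ _
  have hFTC := integral_of_hasDerivAt_of_tendsto hΦderiv (hint1.sub hint2) hbot htop
  simp only [sub_zero, sub_self] at hFTC
  have hsplit : ∫ y, (f' y * (c₀ * E y) - y * f y * (c₀ * E y)) = 
      (∫ y, f' y * (c₀ * E y)) - ∫ y, y * f y * (c₀ * E y) := integral_sub hint1 hint2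
  rw [hsplit] at hFTC
  have hkey : ∫ y, y * f y * (c₀ * E y) = ∫ y, f' y * (c₀ * E y) := by linarith
  rw [gm_integral, gm_integral]
  simp only [gpdf_eq, smul_eq_mul]
  calc ∫ y, (Real.sqrt (2 * Real.pi))⁻¹ * Real.exp (-(1/2) * y ^ 2) * (y * f y)
      = ∫ y, y * f y * (c₀ * E y) := by congr 1; ext y; rw [hE, hc₀]; ring
    _ = ∫ y, f' y * (c₀ * E y) := hkey
    _ = ∫ y, (Real.sqrt (2 * Real.pi))⁻¹ * Real.exp (-(1/2) * y ^ 2) * f' y := by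
        congr 1; ext y; rw [hE, hc₀]; ring

noncomputable def Gf (f : ℝ → ℝ) (x s : ℝ) : ℝ := ∫ y, f (x + s * y) ∂gm

noncomputable def M1 : ℝ := ∫ y, |y| ∂gm
noncomputable def M2 : ℝ := ∫ y, y ^ 2 ∂gm
lemma M1_nonneg : 0 ≤ M1 := integral_nonneg fun y => abs_nonneg y
lemma M2_nonneg : 0 ≤ M2 := integral_nonneg fun y => sq_nonneg y

lemma Gf_zero (f : ℝ → ℝ) (x : ℝ) : Gf f x 0 = f x := by
  unfold Gf
  simp

section quad
variable {f : ℝ → ℝ} {a b c : ℝ} (hfc : Continuous f)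
  (ha : ∀ z, |f z| ≤ a + b * |z| + c * z ^ 2) (hb : 0 ≤ b) (hc : 0 ≤ c)

include hfc ha hb hc in
lemma quad_pointwise (x s : ℝ) (y : ℝ) :
    |f (x + s * y)| ≤ (a + b * |x| + 2 * c * x ^ 2) + b * |s| * |y|
      + 2 * c * s ^ 2 * y ^ 2 := by
  refine (ha _).trans ?_
  have h1 : |x + s * y| ≤ |x| + |s| * |y| := by
    calc |x + s * y| ≤ |x| + |s * y| := abs_add_le _ _
      _ = |x| + |s| * |y| := by rw [abs_mul]
  have h2 : (x + s * y) ^ 2 ≤ 2 * x ^ 2 + 2 * (s * y) ^ 2 := by nlinarith [sq_nonneg (x - s*y)]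
  have h3 : b * |x + s * y| ≤ b * (|x| + |s| * |y|) := mul_le_mul_of_nonneg_left h1 hb
  have h4 : c * (x + s * y) ^ 2 ≤ c * (2 * x ^ 2 + 2 * (s * y) ^ 2) :=
    mul_le_mul_of_nonneg_left h2 hc
  have h5 : (s * y) ^ 2 = s ^ 2 * y ^ 2 := by ring
  nlinarith

include hfc ha hb hc in
lemma Gf_integrand_integrable (x s : ℝ) :
    Integrable (fun y => f (x + s * y)) gm := by
  refine gm_integrable_of_bound _ ?_ _ _ _ (quad_pointwise hfc ha hb hc x s)
  exact (hfc.comp (continuous_const.add (continuous_const.mul continuous_id))).aestronglyMeasurable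

include hfc ha hb hc in
lemma Gf_bound (x s : ℝ) :
    |Gf f x s| ≤ (a + b * |x| + 2 * c * x ^ 2) + b * M1 * |s| + 2 * c * M2 * s ^ 2 := by
  have hint := Gf_integrand_integrable hfc ha hb hc x s
  have h1 : |Gf f x s| ≤ ∫ y, |f (x + s * y)| ∂gm := by
    simpa [Gf] using norm_integral_le_integral_norm (μ := gm) (f := fun y => f (x + s * y))
  refine h1.trans ?_
  have h2 : ∫ y, |f (x + s * y)| ∂gm ≤
      ∫ y, ((a + b * |x| + 2 * c * x ^ 2) + b * |s| * |y| + 2 * c * s ^ 2 * y ^ 2) ∂gm := by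
    refine integral_mono hint.abs (gm_integrable_quad _ _ _) ?_
    exact fun y => quad_pointwise hfc ha hb hc x s y
  refine h2.trans_eq ?_
  have hq := gm_integrable_quad (a + b * |x| + 2 * c * x ^ 2) (b * |s|) (2 * c * s ^ 2)
  have hi1 : Integrable (fun y : ℝ => |y|) gm := by simpa using gm_integrable_quad 0 1 0
  have hi2 : Integrable (fun y : ℝ => y ^ 2) gm := by simpa using gm_integrable_quad 0 0 1
  have H1 : Integrable (fun y : ℝ => (a + b * |x| + 2 * c * x ^ 2) + b * |s| * |y|) gm := by
    exact (integrable_const _).add (hi1.const_mul _)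
  have H1a : Integrable (fun y : ℝ => a + b * |x| + 2 * c * x ^ 2 : ℝ → ℝ) gm := integrable_const _
  have H1b : Integrable (fun y : ℝ => b * |s| * |y|) gm := by exact hi1.const_mul _
  have H2 : Integrable (fun y : ℝ => 2 * c * s ^ 2 * y ^ 2) gm := by exact hi2.const_mul _
  rw [integral_add H1 H2, integral_add H1a H1b, integral_const, integral_const_mul,
    integral_const_mul]
  simp only [measure_univ, probReal_univ, ENNReal.toReal_one, smul_eq_mul, one_mul]
  unfold M1 M2
  ring

include hfc ha hb hc in
lemma Gf_continuous (x : ℝ) : Continuous (fun s => Gf f x s) := by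
  rw [continuous_iff_continuousAt]
  intro s₀
  unfold Gf
  refine continuousAt_of_dominated (F := fun s y => f (x + s * y))
    (bound := fun y => (a + b * |x| + 2 * c * x ^ 2) + b * (|s₀| + 1) * |y|
      + 2 * c * (|s₀| + 1) ^ 2 * y ^ 2) ?_ ?_ (gm_integrable_quad _ _ _) ?_
  · exact Eventually.of_forall fun s =>
      (hfc.comp (continuous_const.add (continuous_const.mul continuous_id))).aestronglyMeasurable
  · filter_upwards [Metric.ball_mem_nhds s₀ one_pos] with s hs
    refine Eventually.of_forall fun y => ?_
    have hs1 : |s| ≤ |s₀| + 1 := by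
      have := mem_ball_iff_norm.mp hs
      have h2 := abs_sub_abs_le_abs_sub s s₀
      simp only [Real.norm_eq_abs] at this
      linarith
    have := quad_pointwise hfc ha hb hc x s y
    simp only [Real.norm_eq_abs]
    refine this.trans ?_
    have e1 : b * |s| * |y| ≤ b * (|s₀| + 1) * |y| := by
      have : b * |s| ≤ b * (|s₀| + 1) := mul_le_mul_of_nonneg_left hs1 hb
      exact mul_le_mul_of_nonneg_right this (abs_nonneg y)
    have e2 : 2 * c * s ^ 2 * y ^ 2 ≤ 2 * c * (|s₀| + 1) ^ 2 * y ^ 2 := by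
      have h0 : s ^ 2 ≤ (|s₀| + 1) ^ 2 := by
        rw [← sq_abs s]
        exact pow_le_pow_left₀ (abs_nonneg s) hs1 2
      have : 2 * c * s ^ 2 ≤ 2 * c * (|s₀| + 1) ^ 2 := by nlinarith
      exact mul_le_mul_of_nonneg_right this (sq_nonneg y)
    linarith
  · refine Eventually.of_forall fun y => ?_
    exact (hfc.comp (continuous_const.add (continuous_id.mul continuous_const))).continuousAt

end quad

section deriv
variable {f f' : ℝ → ℝ} {a b c b₁ c₁ : ℝ}
  (hderiv : ∀ z, HasDerivAt f (f' z) z) (hfc : Continuous f) (hf'c : Continuous f')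
  (ha : ∀ z, |f z| ≤ a + b * |z| + c * z ^ 2) (hb : 0 ≤ b) (hc : 0 ≤ c)
  (ha' : ∀ z, |f' z| ≤ b₁ + c₁ * |z|) (hc₁ : 0 ≤ c₁)

include hderiv hfc hf'c ha hb hc ha' hc₁ in
lemma Gf_hasDerivAt_x (x s : ℝ) : HasDerivAt (fun u => Gf f u s) (Gf f' x s) x := by
  unfold Gf
  have key := hasDerivAt_integral_of_dominated_loc_of_deriv_le (μ := gm)
    (F := fun u y => f (u + s * y)) (F' := fun u y => f' (u + s * y)) (x₀ := x)
    (bound := fun y => (b₁ + c₁ * (|x| + 1)) + (c₁ * |s|) * |y| + 0 * y ^ 2)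
    (s := Metric.ball x 1) (Metric.ball_mem_nhds x one_pos)
    (Eventually.of_forall fun u =>
      (hfc.comp (continuous_const.add (continuous_const.mul continuous_id))).aestronglyMeasurable)
    (Gf_integrand_integrable hfc ha hb hc x s)
    ((hf'c.comp (continuous_const.add (continuous_const.mul continuous_id))).aestronglyMeasurable)
    ?_ (gm_integrable_quad _ _ _) ?_
  · exact key.2
  · refine Eventually.of_forall fun y => fun u hu => ?_
    have hu1 : |u| ≤ |x| + 1 := by
      have := mem_ball_iff_norm.mp hu
      have h2 := abs_sub_abs_le_abs_sub u x
      simp only [Real.norm_eq_abs] at this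
      linarith
    have h3 : |u + s * y| ≤ |x| + 1 + |s| * |y| := by
      calc |u + s * y| ≤ |u| + |s| * |y| := by rw [← abs_mul]; exact abs_add_le _ _
        _ ≤ |x| + 1 + |s| * |y| := by linarith
    have := (ha' (u + s * y)).trans (by nlinarith : b₁ + c₁ * |u + s * y| ≤
      (b₁ + c₁ * (|x| + 1)) + (c₁ * |s|) * |y| + 0 * y ^ 2)
    simpa using this
  · refine Eventually.of_forall fun y => fun u _ => ?_
    have h1 : HasDerivAt (fun u : ℝ => u + s * y) 1 u := by
      simpa using (hasDerivAt_id u).add_const (s * y)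
    simpa [Function.comp_def] using (hderiv (u + s * y)).comp u h1

include hderiv hfc hf'c ha hb hc ha' hc₁ in
lemma Gf_hasDerivAt_s_aux (x s₀ : ℝ) :
    HasDerivAt (fun s => Gf f x s) (∫ y, y * f' (x + s₀ * y) ∂gm) s₀ := by
  unfold Gf
  have key := hasDerivAt_integral_of_dominated_loc_of_deriv_le (μ := gm)
    (F := fun s y => f (x + s * y)) (F' := fun s y => y * f' (x + s * y)) (x₀ := s₀)
    (bound := fun y => 0 + (b₁ + c₁ * |x|) * |y| + (c₁ * (|s₀| + 1)) * y ^ 2)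
    (s := Metric.ball s₀ 1) (Metric.ball_mem_nhds s₀ one_pos)
    (Eventually.of_forall fun s =>
      (hfc.comp (continuous_const.add (continuous_const.mul continuous_id))).aestronglyMeasurable)
    (Gf_integrand_integrable hfc ha hb hc x s₀)
    ((by fun_prop : Continuous fun y : ℝ => y * f' (x + s₀ * y)).aestronglyMeasurable)
    ?_ (gm_integrable_quad _ _ _) ?_
  · exact key.2
  · refine Eventually.of_forall fun y => fun s hs => ?_
    have hs1 : |s| ≤ |s₀| + 1 := by
      have := mem_ball_iff_norm.mp hs
      have h2 := abs_sub_abs_le_abs_sub s s₀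
      simp only [Real.norm_eq_abs] at this
      linarith
    have h3 : |x + s * y| ≤ |x| + |s| * |y| := by
      calc |x + s * y| ≤ |x| + |s * y| := abs_add_le _ _
        _ = |x| + |s| * |y| := by rw [abs_mul]
    have h4 : |y * f' (x + s * y)| = |y| * |f' (x + s * y)| := abs_mul _ _
    simp only [Real.norm_eq_abs, h4]
    have h5 : |f' (x + s * y)| ≤ b₁ + c₁ * (|x| + |s| * |y|) := by
      refine (ha' _).trans ?_
      nlinarith
    calc |y| * |f' (x + s * y)| ≤ |y| * (b₁ + c₁ * (|x| + |s| * |y|)) :=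
          mul_le_mul_of_nonneg_left h5 (abs_nonneg y)
      _ = (b₁ + c₁ * |x|) * |y| + (c₁ * |s|) * (|y| * |y|) := by ring
      _ ≤ (b₁ + c₁ * |x|) * |y| + (c₁ * (|s₀| + 1)) * (|y| * |y|) := by
          have hyy : 0 ≤ |y| * |y| := mul_nonneg (abs_nonneg y) (abs_nonneg y)
          have := mul_le_mul_of_nonneg_right (mul_le_mul_of_nonneg_left hs1 hc₁) hyy
          linarith
      _ = 0 + (b₁ + c₁ * |x|) * |y| + (c₁ * (|s₀| + 1)) * y ^ 2 := by
          rw [← sq_abs y]; ring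
  · refine Eventually.of_forall fun y => fun s _ => ?_
    have h1 : HasDerivAt (fun s : ℝ => x + s * y) y s := by
      simpa using ((hasDerivAt_id s).mul_const y).const_add x
    have := (hderiv (x + s * y)).comp s h1
    simpa [mul_comm, Function.comp_def] using this

include hderiv hfc hf'c ha hb hc ha' hc₁ in
lemma Gf_hasDerivAt_s {f'' : ℝ → ℝ} (hderiv' : ∀ z, HasDerivAt f' (f'' z) z)
    (hf''c : Continuous f'') (C : ℝ) (hC : ∀ z, |f'' z| ≤ C) (x s₀ : ℝ) :
    HasDerivAt (fun s => Gf f x s) (s₀ * Gf f'' x s₀) s₀ := by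
  have h0 := Gf_hasDerivAt_s_aux hderiv hfc hf'c ha hb hc ha' hc₁ x s₀
  have hibp := gm_ibp (fun y => f' (x + s₀ * y)) (fun y => s₀ * f'' (x + s₀ * y))
    (fun y => by
      have h1 : HasDerivAt (fun y : ℝ => x + s₀ * y) s₀ y := by
        simpa using ((hasDerivAt_id y).const_mul s₀).const_add x
      have := (hderiv' (x + s₀ * y)).comp y h1
      simpa [mul_comm, Function.comp_def] using this)
    (continuous_const.mul (hf''c.comp (continuous_const.add
      (continuous_const.mul continuous_id)))) (|s₀| * C)
    (fun y => by
      rw [abs_mul]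
      exact mul_le_mul_of_nonneg_left (hC _) (abs_nonneg s₀))
  rw [hibp] at h0
  rwa [integral_const_mul] at h0
end deriv

section expint
variable {ρ : ℝ} (hρ : 0 < ρ)

include hρ in
lemma int_exp : IntegrableOn (fun t : ℝ => Real.exp (-ρ * t)) (Ioi 0) :=
  exp_neg_integrableOn_Ioi 0 hρ

include hρ in
lemma int_sqrt_exp : IntegrableOn (fun t : ℝ => Real.sqrt t * Real.exp (-ρ * t)) (Ioi 0) := by
  have := integrableOn_rpow_mul_exp_neg_mul_rpow (p := 1) (s := 1/2) (b := ρ)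
    (by norm_num) one_pos hρ
  refine this.congr_fun (fun t ht => ?_) measurableSet_Ioi
  dsimp only
  rw [Real.rpow_one, ← Real.sqrt_eq_rpow]

include hρ in
lemma int_id_exp : IntegrableOn (fun t : ℝ => t * Real.exp (-ρ * t)) (Ioi 0) := by
  have := integrableOn_rpow_mul_exp_neg_mul_rpow (p := 1) (s := 1) (b := ρ)
    (by norm_num) one_pos hρ
  refine this.congr_fun (fun t ht => ?_) measurableSet_Ioi
  norm_num

include hρ in
lemma int_exp_poly (k₁ k₂ k₃ : ℝ) :
    IntegrableOn (fun t : ℝ => Real.exp (-ρ * t) * (k₁ + k₂ * Real.sqrt t + k₃ * t))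
      (Ioi 0) := by
  have h : IntegrableOn (fun t : ℝ => k₁ * Real.exp (-ρ * t)
      + k₂ * (Real.sqrt t * Real.exp (-ρ * t)) + k₃ * (t * Real.exp (-ρ * t))) (Ioi 0) := by
    exact (((int_exp hρ).const_mul k₁).add ((int_sqrt_exp hρ).const_mul k₂)).add
      ((int_id_exp hρ).const_mul k₃)
  exact h.congr_fun (fun t _ => by ring) measurableSet_Ioi

include hρ in
lemma tendsto_exp_poly (k₁ k₂ k₃ : ℝ) (h₂ : 0 ≤ k₂) :
    Tendsto (fun t : ℝ => Real.exp (-ρ * t) * (k₁ + k₂ * Real.sqrt t + k₃ * t))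
      atTop (𝓝 0) := by
  have hexp : Tendsto (fun t : ℝ => Real.exp (-ρ * t)) atTop (𝓝 0) := by
    apply Real.tendsto_exp_atBot.comp
    have h2 : Tendsto (fun t : ℝ => ρ * t) atTop atTop :=
      Tendsto.const_mul_atTop hρ tendsto_id
    exact (tendsto_neg_atBot_iff.mpr h2).congr fun t => by ring
  have hid : Tendsto (fun t : ℝ => t * Real.exp (-ρ * t)) atTop (𝓝 0) := by
    have h1 := tendsto_pow_mul_exp_neg_atTop_nhds_zero 1
    have h2 : Tendsto (fun t : ℝ => ρ * t) atTop atTop :=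
      Tendsto.const_mul_atTop hρ tendsto_id
    have h3 := (h1.comp h2).const_mul (1/ρ)
    simp only [mul_zero] at h3
    refine h3.congr fun t => ?_
    simp only [Function.comp_apply, pow_one]
    rw [show -(ρ * t) = -ρ * t by ring]
    field_simp
  -- bound: for t ≥ 0, |exp(-ρt)*(k₁+k₂√t+k₃t)| ≤ |k₁|*exp(-ρt) + k₂*((1+t)*exp(-ρt)) + |k₃|*(t*exp(-ρt))
  apply squeeze_zero_norm' (a := fun t : ℝ =>
    (|k₁| + k₂) * Real.exp (-ρ * t) + (k₂ + |k₃|) * (t * Real.exp (-ρ * t)))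
  · filter_upwards [eventually_ge_atTop (0:ℝ)] with t ht
    have hst : Real.sqrt t ≤ 1 + t := by
      have h1 : Real.sqrt t ≤ Real.sqrt ((1 + t) ^ 2) := by
        apply Real.sqrt_le_sqrt; nlinarith
      rwa [Real.sqrt_sq (by linarith)] at h1
    have hE : 0 < Real.exp (-ρ * t) := Real.exp_pos _
    rw [Real.norm_eq_abs, abs_mul, abs_of_pos hE]
    have h1 : |k₁ + k₂ * Real.sqrt t + k₃ * t| ≤ |k₁| + k₂ * (1 + t) + |k₃| * t := by
      have := abs_add_le (k₁ + k₂ * Real.sqrt t) (k₃ * t)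
      have h2 := abs_add_le k₁ (k₂ * Real.sqrt t)
      have h3 : |k₂ * Real.sqrt t| = k₂ * Real.sqrt t := by
        rw [abs_of_nonneg (mul_nonneg h₂ (Real.sqrt_nonneg t))]
      have h4 : |k₃ * t| ≤ |k₃| * t := by
        rw [abs_mul, abs_of_nonneg ht]
      have h5 : k₂ * Real.sqrt t ≤ k₂ * (1 + t) := mul_le_mul_of_nonneg_left hst h₂
      linarith
    calc Real.exp (-ρ * t) * |k₁ + k₂ * Real.sqrt t + k₃ * t|
        ≤ Real.exp (-ρ * t) * (|k₁| + k₂ * (1 + t) + |k₃| * t) :=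
          mul_le_mul_of_nonneg_left h1 hE.le
      _ = (|k₁| + k₂) * Real.exp (-ρ * t) + (k₂ + |k₃|) * (t * Real.exp (-ρ * t)) := by ring
  · have := (hexp.const_mul (|k₁| + k₂)).add (hid.const_mul (k₂ + |k₃|))
    simpa using this
end expint

lemma inner_eq {σ t : ℝ} (hσ : 0 < σ) (ht : 0 < t) (f : ℝ → ℝ) (hfc : Continuous f) (x : ℝ) :
    ∫ y, f (x + y) ∂(gaussianReal 0 (Real.toNNReal (σ ^ 2 * t)))
      = Gf f x (σ * Real.sqrt t) := by
  have hmap : (gaussianReal 0 1).map (fun y => (σ * Real.sqrt t) * y)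
      = gaussianReal 0 (Real.toNNReal (σ ^ 2 * t)) := by
    rw [show (fun y : ℝ => (σ * Real.sqrt t) * y) = ((σ * Real.sqrt t) * ·) from rfl,
      gaussianReal_map_const_mul]
    congr 1
    · simp
    · ext
      simp only [NNReal.coe_mul, NNReal.coe_mk, NNReal.coe_one, mul_one]
      rw [Real.coe_toNNReal _ (by positivity)]
      rw [mul_pow, Real.sq_sqrt ht.le]
  unfold Gf gm
  rw [← hmap, integral_map (by fun_prop) (by exact (hfc.comp (continuous_const.add
    continuous_id)).aestronglyMeasurable)]


section outer
variable {ρ σ : ℝ} (hρ : 0 < ρ) (hσ : 0 < σ)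
  {f f' : ℝ → ℝ} {a b c b₁ c₁ : ℝ}
  (hderiv : ∀ z, HasDerivAt f (f' z) z) (hfc : Continuous f) (hf'c : Continuous f')
  (ha : ∀ z, |f z| ≤ a + b * |z| + c * z ^ 2) (hb : 0 ≤ b) (hc : 0 ≤ c)
  (ha' : ∀ z, |f' z| ≤ b₁ + c₁ * |z|) (hc₁ : 0 ≤ c₁)

include hρ hσ hfc ha hb hc in
lemma outer_integrable (x : ℝ) :
    IntegrableOn (fun t : ℝ => Real.exp (-ρ * t) * Gf f x (σ * Real.sqrt t)) (Ioi 0) := by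
  refine Integrable.mono' (int_exp_poly hρ (a + b * |x| + 2 * c * x ^ 2)
    (b * M1 * σ) (2 * c * M2 * σ ^ 2)) ?_ ?_
  · refine ((Real.continuous_exp.comp (continuous_const.mul continuous_id)).mul
      ((Gf_continuous hfc ha hb hc x).comp
        (continuous_const.mul Real.continuous_sqrt))).aestronglyMeasurable.restrict
  · filter_upwards [ae_restrict_mem measurableSet_Ioi] with t ht
    have ht0 : (0:ℝ) < t := ht
    have hsq : Real.sqrt t ≠ 0 := by positivity
    have hGb := Gf_bound hfc ha hb hc x (σ * Real.sqrt t)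
    rw [Real.norm_eq_abs, abs_mul, abs_of_pos (Real.exp_pos _)]
    have h1 : |σ * Real.sqrt t| = σ * Real.sqrt t := abs_of_pos (by positivity)
    have h2 : (σ * Real.sqrt t) ^ 2 = σ ^ 2 * t := by
      rw [mul_pow, Real.sq_sqrt ht0.le]
    rw [h1, h2] at hGb
    refine mul_le_mul_of_nonneg_left (hGb.trans_eq (by ring)) (Real.exp_pos _).le

include hρ hσ hderiv hfc hf'c ha hb hc ha' hc₁ in
lemma outer_hasDerivAt (x : ℝ) :
    HasDerivAt (fun u => ∫ t in Ioi 0, Real.exp (-ρ * t) * Gf f u (σ * Real.sqrt t))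
      (∫ t in Ioi 0, Real.exp (-ρ * t) * Gf f' x (σ * Real.sqrt t)) x := by
  have ha'' : ∀ z, |f' z| ≤ b₁ + c₁ * |z| + 0 * z ^ 2 := by
    intro z; simpa using ha' z
  have key := hasDerivAt_integral_of_dominated_loc_of_deriv_le
    (μ := volume.restrict (Ioi 0)) (x₀ := x) (s := Metric.ball x 1) (Metric.ball_mem_nhds x one_pos)
    (F := fun u t => Real.exp (-ρ * t) * Gf f u (σ * Real.sqrt t))
    (F' := fun u t => Real.exp (-ρ * t) * Gf f' u (σ * Real.sqrt t))
    (bound := fun t => Real.exp (-ρ * t) *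
      ((b₁ + c₁ * (|x| + 1)) + (c₁ * M1 * σ) * Real.sqrt t + 0 * t))
    (Eventually.of_forall fun u =>
      ((Real.continuous_exp.comp (continuous_const.mul continuous_id)).mul
        ((Gf_continuous hfc ha hb hc u).comp
          (continuous_const.mul Real.continuous_sqrt))).aestronglyMeasurable.restrict)
    (outer_integrable hρ hσ hfc ha hb hc x)
    (((Real.continuous_exp.comp (continuous_const.mul continuous_id)).mul
      ((Gf_continuous hf'c ha'' hc₁ le_rfl x).comp
        (continuous_const.mul Real.continuous_sqrt))).aestronglyMeasurable.restrict)
    ?_ (int_exp_poly hρ _ _ _) ?_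
  · exact key.2
  · filter_upwards [ae_restrict_mem measurableSet_Ioi] with t ht
    intro u hu
    have ht0 : (0:ℝ) < t := ht
    have hu1 : |u| ≤ |x| + 1 := by
      have := mem_ball_iff_norm.mp hu
      have h2 := abs_sub_abs_le_abs_sub u x
      simp only [Real.norm_eq_abs] at this
      linarith
    have hGb := Gf_bound hf'c ha'' hc₁ le_rfl u (σ * Real.sqrt t)
    have h1 : |σ * Real.sqrt t| = σ * Real.sqrt t := abs_of_pos (by positivity)
    rw [h1] at hGb
    rw [Real.norm_eq_abs, abs_mul, abs_of_pos (Real.exp_pos _)]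
    refine mul_le_mul_of_nonneg_left (hGb.trans ?_) (Real.exp_pos _).le
    have : c₁ * |u| ≤ c₁ * (|x| + 1) := mul_le_mul_of_nonneg_left hu1 hc₁
    have h3 : c₁ * M1 * (σ * Real.sqrt t) = (c₁ * M1 * σ) * Real.sqrt t := by ring
    nlinarith [Real.sqrt_nonneg t, M1_nonneg, sq_nonneg t]
  · filter_upwards [ae_restrict_mem measurableSet_Ioi] with t ht
    intro u hu
    exact (Gf_hasDerivAt_x hderiv hfc hf'c ha hb hc ha' hc₁ u
      (σ * Real.sqrt t)).const_mul (Real.exp (-ρ * t))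
end outer

/-- `p₁(x) = ∫_0^∞ e^{−ρt} E[h(x + σ̃ B_t)] dt`, written with the centered Gaussian measure
of variance `σ̃²t` (which is the Dirac mass at `0` when `t = 0`). -/
noncomputable def p1 (ρ σ : ℝ) (h : ℝ → ℝ) (x : ℝ) : ℝ :=
  ∫ t in Set.Ioi (0:ℝ), Real.exp (-ρ * t) *
    ∫ y, h (x + y) ∂(gaussianReal 0 (Real.toNNReal (σ ^ 2 * t)))

/-- The resolvent equation `ρ p₁ − (σ̃²/2) p₁'' = h` for the discounted expected running cost
of the uncontrolled one-dimensional diffusion, for `h ∈ C²` with bounded second derivative. -/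
theorem p1_resolvent_equation
    (ρ σ : ℝ) (hρ : 0 < ρ) (hσ : 0 < σ)
    (h : ℝ → ℝ) (hh : ContDiff ℝ 2 h)
    (C : ℝ) (hbound : ∀ y : ℝ, |deriv (deriv h) y| ≤ C) :
    (Differentiable ℝ (p1 ρ σ h) ∧ Differentiable ℝ (deriv (p1 ρ σ h))) ∧
    (∀ x : ℝ, ρ * p1 ρ σ h x - σ ^ 2 / 2 * deriv (deriv (p1 ρ σ h)) x = h x) := by
  have hC0 : 0 ≤ C := le_trans (abs_nonneg _) (hbound 0)
  have hdiff : Differentiable ℝ h := hh.differentiable two_ne_zero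
  have hh2 : ContDiff ℝ ((1 : WithTop ℕ∞) + 1) h := by
    convert hh using 2
    exact one_add_one_eq_two
  have hh' : ContDiff ℝ 1 (deriv h) := (contDiff_succ_iff_deriv.mp hh2).2.2
  have hdiff' : Differentiable ℝ (deriv h) := hh'.differentiable one_ne_zero
  have hd1 : ∀ z, HasDerivAt h (deriv h z) z := fun z => (hdiff z).hasDerivAt
  have hd2 : ∀ z, HasDerivAt (deriv h) (deriv (deriv h) z) z := fun z => (hdiff' z).hasDerivAt
  have hc2 : Continuous (deriv (deriv h)) := hh'.continuous_deriv le_rfl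
  have hc1 : Continuous (deriv h) := hh'.continuous
  have hc0 : Continuous h := hh.continuous
  set B := |deriv h 0| with hBdef
  set A := |h 0| with hAdef
  have hB : 0 ≤ B := abs_nonneg _
  have ha' : ∀ z, |deriv h z| ≤ B + C * |z| := by
    intro z
    have key := Convex.norm_image_sub_le_of_norm_deriv_le (f := deriv h) (s := univ)
      (fun w _ => hdiff' w) (fun w _ => by simpa using hbound w) convex_univ
      (mem_univ 0) (mem_univ z)
    simp only [Real.norm_eq_abs, sub_zero] at key
    have habs := abs_sub_abs_le_abs_sub (deriv h z) (deriv h 0)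
    linarith
  have ha : ∀ z, |h z| ≤ A + B * |z| + C * z ^ 2 := by
    intro z
    have hz : z ∈ Metric.closedBall (0:ℝ) |z| := by
      simp [Metric.mem_closedBall, Real.dist_eq]
    have h0 : (0:ℝ) ∈ Metric.closedBall (0:ℝ) |z| := by
      simp [Metric.mem_closedBall, Real.dist_eq, abs_nonneg]
    have key := Convex.norm_image_sub_le_of_norm_deriv_le (f := h) (C := B + C * |z|)
      (s := Metric.closedBall (0:ℝ) |z|) (fun w _ => hdiff w)
      (fun w hw => by
        have hwz : |w| ≤ |z| := by simpa [Real.dist_eq] using hw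
        have := ha' w
        have h2 : C * |w| ≤ C * |z| := mul_le_mul_of_nonneg_left hwz hC0
        simp only [Real.norm_eq_abs]
        linarith)
      (convex_closedBall 0 |z|) h0 hz
    simp only [Real.norm_eq_abs, sub_zero] at key
    have habs := abs_sub_abs_le_abs_sub (h z) (h 0)
    have hzz : |z| * |z| = z ^ 2 := by rw [← sq_abs]; ring
    nlinarith
  have ha1 : ∀ z, |deriv h z| ≤ B + C * |z| + 0 * z ^ 2 := fun z => by simpa using ha' z
  have ha2 : ∀ z, |deriv (deriv h) z| ≤ C + 0 * |z| := fun z => by simpa using hbound z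
  set P : ℝ → ℝ := fun x => ∫ t in Ioi 0, Real.exp (-ρ * t) * Gf h x (σ * Real.sqrt t)
    with hPdef
  set P₁ : ℝ → ℝ := fun x => ∫ t in Ioi 0, Real.exp (-ρ * t) * Gf (deriv h) x (σ * Real.sqrt t)
    with hP₁def
  set Q : ℝ → ℝ :=
    fun x => ∫ t in Ioi 0, Real.exp (-ρ * t) * Gf (deriv (deriv h)) x (σ * Real.sqrt t)
    with hQdef
  have hp1P : p1 ρ σ h = P := by
    funext x
    unfold p1
    rw [hPdef]
    refine setIntegral_congr_fun measurableSet_Ioi fun t ht => ?_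
    rw [inner_eq hσ ht h hc0 x]
  have HP : ∀ x, HasDerivAt P (P₁ x) x := fun x =>
    outer_hasDerivAt hρ hσ hd1 hc0 hc1 ha hB hC0 ha' hC0 x
  have HP₁ : ∀ x, HasDerivAt P₁ (Q x) x := fun x =>
    outer_hasDerivAt hρ hσ hd2 hc1 hc2 ha1 hC0 le_rfl ha2 le_rfl x
  have hderivP : deriv P = P₁ := funext fun x => (HP x).deriv
  constructor
  · rw [hp1P]
    refine ⟨fun x => (HP x).differentiableAt, ?_⟩
    rw [hderivP]
    exact fun x => (HP₁ x).differentiableAt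
  · intro x
    rw [hp1P]
    have hQx : deriv (deriv P) x = Q x := by
      rw [hderivP]; exact (HP₁ x).deriv
    rw [hQx]
    -- FTC in t
    set F : ℝ → ℝ := fun t => Real.exp (-ρ * t) * Gf h x (σ * Real.sqrt t) with hFdef
    set F' : ℝ → ℝ := fun t =>
      σ ^ 2 / 2 * (Real.exp (-ρ * t) * Gf (deriv (deriv h)) x (σ * Real.sqrt t))
        - ρ * (Real.exp (-ρ * t) * Gf h x (σ * Real.sqrt t)) with hF'def
    have hFc : Continuous F := by
      rw [hFdef]
      exact (Real.continuous_exp.comp (continuous_const.mul continuous_id)).mul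
        ((Gf_continuous hc0 ha hB hC0 x).comp (continuous_const.mul Real.continuous_sqrt))
    have hFd : ∀ t ∈ Ioi (0:ℝ), HasDerivAt F (F' t) t := by
      intro t ht
      have ht0 : (0:ℝ) < t := ht
      have hsqpos : 0 < Real.sqrt t := Real.sqrt_pos.mpr ht0
      have he : HasDerivAt (fun t : ℝ => Real.exp (-ρ * t)) (-ρ * Real.exp (-ρ * t)) t := by
        have h1 : HasDerivAt (fun t : ℝ => -ρ * t) (-ρ) t := by
          simpa using (hasDerivAt_id t).const_mul (-ρ)
        simpa [mul_comm] using h1.exp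
      have hsq : HasDerivAt (fun t : ℝ => σ * Real.sqrt t) (σ * (1 / (2 * Real.sqrt t))) t :=
        (Real.hasDerivAt_sqrt ht0.ne').const_mul σ
      have hGs : HasDerivAt (fun s => Gf h x s)
          ((σ * Real.sqrt t) * Gf (deriv (deriv h)) x (σ * Real.sqrt t)) (σ * Real.sqrt t) :=
        Gf_hasDerivAt_s hd1 hc0 hc1 ha hB hC0 ha' hC0 hd2 hc2 C hbound x (σ * Real.sqrt t)
      have hcomp := hGs.comp t hsq
      have hmul := he.mul hcomp
      rw [hF'def]
      exact hmul.congr_deriv (by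
        simp only [Function.comp_apply]
        field_simp
        ring)
    have intQ : IntegrableOn
        (fun t => Real.exp (-ρ * t) * Gf (deriv (deriv h)) x (σ * Real.sqrt t)) (Ioi 0) := by
      refine outer_integrable (a := C) (b := 0) (c := 0) hρ hσ hc2 (fun z => ?_) le_rfl le_rfl x
      simpa using hbound z
    have intP : IntegrableOn F (Ioi 0) := outer_integrable hρ hσ hc0 ha hB hC0 x
    have intF' : IntegrableOn F' (Ioi 0) := by
      rw [hF'def]
      exact (intQ.const_mul _).sub (intP.const_mul ρ)
    have htop : Tendsto F atTop (𝓝 0) := by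
      apply squeeze_zero_norm' (a := fun t : ℝ => Real.exp (-ρ * t) *
        ((A + B * |x| + 2 * C * x ^ 2) + (B * M1 * σ) * Real.sqrt t + (2 * C * M2 * σ ^ 2) * t))
      · filter_upwards [eventually_gt_atTop (0:ℝ)] with t ht0
        have hGb := Gf_bound hc0 ha hB hC0 x (σ * Real.sqrt t)
        have h1 : |σ * Real.sqrt t| = σ * Real.sqrt t := abs_of_pos (by positivity)
        have h2 : (σ * Real.sqrt t) ^ 2 = σ ^ 2 * t := by
          rw [mul_pow, Real.sq_sqrt ht0.le]
        rw [h1, h2] at hGb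
        rw [hFdef]
        simp only [Real.norm_eq_abs, abs_mul, abs_of_pos (Real.exp_pos (-ρ * t))]
        refine mul_le_mul_of_nonneg_left (hGb.trans_eq (by ring)) (Real.exp_pos _).le
      · exact tendsto_exp_poly hρ _ _ _ (mul_nonneg (mul_nonneg hB M1_nonneg) hσ.le)
    have hFTC := integral_Ioi_of_hasDerivAt_of_tendsto hFc.continuousWithinAt hFd intF' htop
    have hF0 : F 0 = h x := by
      rw [hFdef]
      simp [Real.sqrt_zero, Gf_zero]
    have hsplit : ∫ t in Ioi 0, F' t = σ ^ 2 / 2 * Q x - ρ * P x := by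
      rw [hF'def]
      rw [integral_sub (intQ.const_mul _) (intP.const_mul ρ), integral_const_mul,
        integral_const_mul]
    rw [hsplit, hF0, zero_sub] at hFTC
    linarith
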